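/- (Strongly calibrated implies weakly calibrated.) Let d ∈ ℕ, let Y be a measurable space, let μ_0 be a regular probability measure on ℝ^d, let P : ℝ^d → P(Y) be a Markov kernel (the data-generating model), and let μ : Y → P(ℝ^d) be a Markov kernel (the learning procedure with fixed initial belief μ_0) such that μ(y) is a regular probability measure for every y ∈ Y. Let ρ denote the joint law of (θ, y), where θ ~ μ_0 and y | θ ~ P_θ. Suppose that for every test function f ∈ F_d with range in (a,b), the pushforward of ρ under the map (θ, y) ↦ F_{f_#μ(y)}(f(θ)), where F_{f_#μ(y)}(z) := μ(y)({x : f(x) ≤ z}), is the uniform distribution on (0,1). Then ∫∫ μ(y) dP_θ(y) dμ_0(θ) = μ_0; that is, the bind of μ_0 with the kernel θ ↦ (P_θ bound with μ) equals μ_0, so the learning procedure is weakly calibrated to (μ_0, P). -/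

import Mathlib

open MeasureTheory ProbabilityTheory Set
open scoped ENNReal NNReal

/-- The uniform probability distribution on the open interval (0,1). -/
noncomputable def unif01 : Measure ℝ := volume.restrict (Ioo (0:ℝ) 1)

/-- The open interval (a,b) in ℝ, with possibly infinite endpoints a, b ∈ EReal. -/
def erealIoo (a b : EReal) : Set ℝ := {x : ℝ | a < (x : EReal) ∧ (x : EReal) < b}

/-- A measure on ℝ is regular on (a,b) if it is supported in (a,b) and equivalent to
the restriction of Lebesgue measure to (a,b). -/
def regularOn (γ : Measure ℝ) (a b : EReal) : Prop :=
  γ (erealIoo a b)ᶜ = 0 ∧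
  γ ≪ volume.restrict (erealIoo a b) ∧
  volume.restrict (erealIoo a b) ≪ γ

/-- A measure on ℝ^d is regular if it is equivalent to Lebesgue measure. -/
def regular {d : ℕ} (ν : Measure (Fin d → ℝ)) : Prop :=
  ν ≪ volume ∧ volume ≪ ν

/-- The set of test functions F_d: measurable f : ℝ^d → ℝ with range in some open interval
(a,b), such that f_#ν is regular on (a,b) whenever ν is a regular probability measure. -/
def testFun {d : ℕ} (f : (Fin d → ℝ) → ℝ) : Prop :=
  Measurable f ∧
  ∃ a b : EReal, a < b ∧ (∀ x, a < (f x : EReal) ∧ (f x : EReal) < b) ∧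
    ∀ ν : Measure (Fin d → ℝ), IsProbabilityMeasure ν → regular ν →
      regularOn (ν.map f) a b


/-- Piecewise "swap" map: (-∞,0) → (1,2) and (0,∞) → (0,1), increasing on each piece. -/
noncomputable def phi (x : ℝ) : ℝ :=
  if x < 0 then 1 + (1 - x)⁻¹ else if x = 0 then 3/2 else 1 - (1 + x)⁻¹

lemma phi_meas : Measurable phi := by
  unfold phi
  exact Measurable.ite (measurableSet_lt measurable_id measurable_const)
    (by fun_prop)
    (Measurable.ite (measurableSet_eq) measurable_const (by fun_prop))

lemma phi_neg {x : ℝ} (h : x < 0) : phi x = 1 + (1 - x)⁻¹ := if_pos h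

lemma phi_posx {x : ℝ} (h : 0 < x) : phi x = 1 - (1 + x)⁻¹ := by
  unfold phi; rw [if_neg (by linarith), if_neg (by linarith)]

lemma phi_zero : phi 0 = 3/2 := by unfold phi; norm_num

lemma phi_mem_neg {x : ℝ} (h : x < 0) : phi x ∈ Ioo (1:ℝ) 2 := by
  rw [phi_neg h]
  have h1 : (1:ℝ) < 1 - x := by linarith
  constructor
  · have : 0 < (1 - x)⁻¹ := by positivity
    linarith
  · have : (1 - x)⁻¹ < 1 := by
      rw [inv_lt_one_iff₀]; right; linarith
    linarith

lemma phi_mem_pos {x : ℝ} (h : 0 < x) : phi x ∈ Ioo (0:ℝ) 1 := by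
  rw [phi_posx h]
  have h1 : (1:ℝ) < 1 + x := by linarith
  constructor
  · have : (1 + x)⁻¹ < 1 := by rw [inv_lt_one_iff₀]; right; linarith
    linarith
  · have : 0 < (1 + x)⁻¹ := by positivity
    linarith

lemma phi_range (x : ℝ) : phi x ∈ Ioo (0:ℝ) 2 := by
  rcases lt_trichotomy x 0 with h | h | h
  · have := phi_mem_neg h; exact ⟨by linarith [this.1], this.2⟩
  · rw [h, phi_zero]; norm_num
  · have := phi_mem_pos h; exact ⟨this.1, by linarith [this.2]⟩

lemma phi_le_phi_neg {x y : ℝ} (hx : x < 0) (hy : y < 0) : phi x ≤ phi y ↔ x ≤ y := by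
  rw [phi_neg hx, phi_neg hy, add_le_add_iff_left,
    inv_le_inv₀ (by linarith) (by linarith)]
  constructor <;> intro <;> linarith

lemma phi_le_phi_pos {x y : ℝ} (hx : 0 < x) (hy : 0 < y) : phi x ≤ phi y ↔ x ≤ y := by
  rw [phi_posx hx, phi_posx hy, sub_le_sub_iff_left,
    inv_le_inv₀ (by linarith) (by linarith)]
  constructor <;> intro <;> linarith

lemma image_null_of_diffOn {g : ℝ → ℝ} {s : Set ℝ} (hg : DifferentiableOn ℝ g s)
    (hs : volume s = 0) : volume (g '' s) = 0 :=
  addHaar_image_eq_zero_of_differentiableOn_of_addHaar_eq_zero volume hg hs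

lemma erealIoo_coe (a b : ℝ) : erealIoo (a : EReal) (b : EReal) = Ioo a b := by
  ext x; simp [erealIoo, EReal.coe_lt_coe_iff, mem_Ioo]

lemma phi_eq_on_neg {x : ℝ} (hx : x < 0) (y : ℝ) (hy : y = phi x) :
    y ∈ Ioo (1:ℝ) 2 ∧ 1 - (y - 1)⁻¹ = x := by
  have h1 : y - 1 = (1 - x)⁻¹ := by rw [hy, phi_neg hx]; ring
  refine ⟨hy ▸ phi_mem_neg hx, ?_⟩
  rw [h1, inv_inv]; ring

lemma phi_eq_on_pos {x : ℝ} (hx : 0 < x) (y : ℝ) (hy : y = phi x) :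
    y ∈ Ioo (0:ℝ) 1 ∧ (1 - y)⁻¹ - 1 = x := by
  have h1 : 1 - y = (1 + x)⁻¹ := by rw [hy, phi_posx hx]; ring
  refine ⟨hy ▸ phi_mem_pos hx, ?_⟩
  rw [h1, inv_inv]; ring

/-- phi is a bijection from ℝ\{0} onto (0,1)∪(1,2); surjectivity part -/
lemma phi_surj_low {y : ℝ} (hy : y ∈ Ioo (0:ℝ) 1) : ∃ x, 0 < x ∧ phi x = y := by
  refine ⟨(1 - y)⁻¹ - 1, ?_, ?_⟩
  · have h1 : (1:ℝ) < (1 - y)⁻¹ := by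
      rw [lt_inv_comm₀ (by norm_num) (by linarith [hy.1, hy.2])]
      · linarith [hy.1]
    linarith
  · have hx : (0:ℝ) < (1 - y)⁻¹ - 1 := by
      have h1 : (1:ℝ) < (1 - y)⁻¹ := by
        rw [lt_inv_comm₀ (by norm_num) (by linarith [hy.1, hy.2])]
        linarith [hy.1]
      linarith
    rw [phi_posx hx]
    have : 1 + ((1 - y)⁻¹ - 1) = (1 - y)⁻¹ := by ring
    rw [this, inv_inv]; ring

lemma phi_surj_high {y : ℝ} (hy : y ∈ Ioo (1:ℝ) 2) : ∃ x, x < 0 ∧ phi x = y := by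
  refine ⟨1 - (y - 1)⁻¹, ?_, ?_⟩
  · have h1 : (1:ℝ) < (y - 1)⁻¹ := by
      rw [lt_inv_comm₀ (by norm_num) (by linarith [hy.1])]
      linarith [hy.2]
    linarith
  · have hx : 1 - (y - 1)⁻¹ < 0 := by
      have h1 : (1:ℝ) < (y - 1)⁻¹ := by
        rw [lt_inv_comm₀ (by norm_num) (by linarith [hy.1])]
        linarith [hy.2]
      linarith
    rw [phi_neg hx]
    have : 1 - (1 - (y - 1)⁻¹) = (y - 1)⁻¹ := by ring
    rw [this, inv_inv]; ring

lemma regularOn_map_phi (γ : Measure ℝ) [IsProbabilityMeasure γ]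
    (h1 : γ ≪ volume) (h2 : volume ≪ γ) :
    regularOn (γ.map phi) ((0:ℝ) : EReal) ((2:ℝ) : EReal) := by
  rw [regularOn, erealIoo_coe]
  refine ⟨?_, ?_, ?_⟩
  · rw [Measure.map_apply phi_meas measurableSet_Ioo.compl]
    have he : phi ⁻¹' (Ioo (0:ℝ) 2)ᶜ = ∅ := by
      ext x
      simp only [mem_preimage, mem_compl_iff, mem_empty_iff_false, iff_false, not_not]
      exact phi_range x
    rw [he]; simp
  · refine Measure.AbsolutelyContinuous.mk fun N hN h0 => ?_
    rw [Measure.restrict_apply hN] at h0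
    rw [Measure.map_apply phi_meas hN]
    have hsub : phi ⁻¹' N ⊆
        ((fun y => (1 - y)⁻¹ - 1) '' (N ∩ Ioo 0 1)) ∪
        ((fun y => 1 - (y - 1)⁻¹) '' (N ∩ Ioo 1 2)) ∪ {0} := by
      intro x hx
      rcases lt_trichotomy x 0 with h | h | h
      · obtain ⟨hmem, hinv⟩ := phi_eq_on_neg h (phi x) rfl
        exact Or.inl <| Or.inr ⟨phi x, ⟨hx, hmem⟩, hinv⟩
      · exact Or.inr (by simp [h])
      · obtain ⟨hmem, hinv⟩ := phi_eq_on_pos h (phi x) rfl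
        exact Or.inl <| Or.inl ⟨phi x, ⟨hx, hmem⟩, hinv⟩
    refine measure_mono_null hsub ?_
    have hn1 : volume (N ∩ Ioo (0:ℝ) 1) = 0 :=
      measure_mono_null (inter_subset_inter_right _ (Ioo_subset_Ioo le_rfl (by norm_num))) h0
    have hn2 : volume (N ∩ Ioo (1:ℝ) 2) = 0 :=
      measure_mono_null (inter_subset_inter_right _ (Ioo_subset_Ioo (by norm_num) le_rfl)) h0
    have hd1 : DifferentiableOn ℝ (fun y : ℝ => (1 - y)⁻¹ - 1) (N ∩ Ioo 0 1) := by
      intro y hy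
      have : (1:ℝ) - y ≠ 0 := by have := hy.2; intro hc; rcases this with ⟨_, h2'⟩; linarith
      exact ((((differentiable_const (1:ℝ)).sub differentiable_fun_id).differentiableAt.inv
        this).sub_const 1).differentiableWithinAt
    have hd2 : DifferentiableOn ℝ (fun y : ℝ => 1 - (y - 1)⁻¹) (N ∩ Ioo 1 2) := by
      intro y hy
      have : y - (1:ℝ) ≠ 0 := by have := hy.2; intro hc; rcases this with ⟨h1', _⟩; linarith
      exact ((differentiable_const (1:ℝ)).differentiableAt.sub
        (((differentiable_fun_id (𝕜 := ℝ) (E := ℝ)).sub (differentiable_const (1:ℝ))).differentiableAt.inv this)).differentiableWithinAt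
    refine measure_union_null (measure_union_null ?_ ?_) ?_
    · exact h1 (image_null_of_diffOn hd1 hn1)
    · exact h1 (image_null_of_diffOn hd2 hn2)
    · exact h1 (Real.volume_singleton)
  · refine Measure.AbsolutelyContinuous.mk fun N hN h0 => ?_
    rw [Measure.map_apply phi_meas hN] at h0
    have hS : volume (phi ⁻¹' N) = 0 := h2 h0
    rw [Measure.restrict_apply hN]
    have hsub : N ∩ Ioo (0:ℝ) 2 ⊆
        (phi '' (phi ⁻¹' N ∩ Iio 0)) ∪ {1} ∪ (phi '' (phi ⁻¹' N ∩ Ioi 0)) := by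
      intro y ⟨hyN, hy02⟩
      rcases lt_trichotomy y 1 with h | h | h
      · obtain ⟨x, hx, hphix⟩ := phi_surj_low ⟨hy02.1, h⟩
        exact Or.inr ⟨x, ⟨by rw [mem_preimage, hphix]; exact hyN, hx⟩, hphix⟩
      · exact Or.inl (Or.inr (by simp [h]))
      · obtain ⟨x, hx, hphix⟩ := phi_surj_high ⟨h, hy02.2⟩
        exact Or.inl <| Or.inl ⟨x, ⟨by rw [mem_preimage, hphix]; exact hyN, hx⟩, hphix⟩
    refine measure_mono_null hsub ?_
    have hi1 : volume (phi '' (phi ⁻¹' N ∩ Iio 0)) = 0 := by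
      have heq : phi '' (phi ⁻¹' N ∩ Iio 0) = (fun x => 1 + (1 - x)⁻¹) '' (phi ⁻¹' N ∩ Iio 0) :=
        image_congr fun x hx => phi_neg hx.2
      rw [heq]
      refine image_null_of_diffOn ?_ (measure_mono_null inter_subset_left hS)
      intro x hx
      have : (1:ℝ) - x ≠ 0 := by have := hx.2; simp only [mem_Iio] at this; intro hc; linarith
      exact ((differentiable_const (1:ℝ)).differentiableAt.add
        (((differentiable_const (1:ℝ)).sub differentiable_fun_id).differentiableAt.inv this)).differentiableWithinAt
    have hi2 : volume (phi '' (phi ⁻¹' N ∩ Ioi 0)) = 0 := by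
      have heq : phi '' (phi ⁻¹' N ∩ Ioi 0) = (fun x => 1 - (1 + x)⁻¹) '' (phi ⁻¹' N ∩ Ioi 0) :=
        image_congr fun x hx => phi_posx hx.2
      rw [heq]
      refine image_null_of_diffOn ?_ (measure_mono_null inter_subset_left hS)
      intro x hx
      have : (1:ℝ) + x ≠ 0 := by have := hx.2; simp only [mem_Ioi] at this; intro hc; linarith
      exact ((differentiable_const (1:ℝ)).differentiableAt.sub
        (((differentiable_const (1:ℝ)).add differentiable_fun_id).differentiableAt.inv this)).differentiableWithinAt
    exact measure_union_null (measure_union_null hi1 Real.volume_singleton) hi2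

lemma erealIoo_bot_top : erealIoo ⊥ ⊤ = univ := by
  ext x; simp [erealIoo]

variable {d : ℕ} [Nonempty (Fin d)]

noncomputable def fmax (c : Fin d → ℝ) (x : Fin d → ℝ) : ℝ :=
  Finset.univ.sup' Finset.univ_nonempty (fun i => x i - c i)

lemma fmax_meas (c : Fin d → ℝ) : Measurable (fmax c) := by
  have : fmax c = Finset.univ.sup' Finset.univ_nonempty (fun i (x : Fin d → ℝ) => x i - c i) := by
    funext x
    rw [fmax, Finset.sup'_apply]
  rw [this]
  exact Finset.measurable_sup' Finset.univ_nonempty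
    (fun i _ => (measurable_pi_apply i).sub measurable_const)

lemma fmax_le_iff {c x : Fin d → ℝ} {t : ℝ} : fmax c x ≤ t ↔ ∀ i, x i ≤ c i + t := by
  rw [fmax, Finset.sup'_le_iff]
  exact ⟨fun h i => by linarith [h i (Finset.mem_univ i)], fun h i _ => by linarith [h i]⟩

lemma fmax_le_set (c : Fin d → ℝ) (t : ℝ) :
    {x | fmax c x ≤ t} = univ.pi (fun i => Iic (c i + t)) := by
  ext x
  simp only [mem_setOf_eq, fmax_le_iff, mem_pi, mem_univ, forall_true_left, mem_Iic]

omit [Nonempty (Fin d)] in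
/-- A cylinder over a Lebesgue-null set is null. -/
lemma cylinder_null (i : Fin d) {N : Set ℝ} (hN : volume N = 0) :
    volume {x : Fin d → ℝ | x i ∈ N} = 0 := by
  obtain ⟨N', hNN', hN'm, hN'0⟩ := exists_measurable_superset_of_null hN
  refine measure_mono_null (t := {x : Fin d → ℝ | x i ∈ N'}) (fun x hx => hNN' hx) ?_
  have hset : {x : Fin d → ℝ | x i ∈ N'} = univ.pi (Function.update (fun _ => univ) i N') := by
    ext x
    simp only [mem_setOf_eq, mem_pi, mem_univ, forall_true_left]
    constructor
    · intro h j
      rcases eq_or_ne j i with rfl | hj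
      · simpa using h
      · simp [Function.update_of_ne hj]
    · intro h; have := h i; simpa using this
  rw [hset, volume_pi, Measure.pi_pi]
  refine Finset.prod_eq_zero (Finset.mem_univ i) ?_
  simp [hN'0]

lemma fmax_preimage_null (c : Fin d → ℝ) {N : Set ℝ} (hN : volume N = 0) :
    volume (fmax c ⁻¹' N) = 0 := by
  obtain ⟨N', hNN', hN'm, hN'0⟩ := exists_measurable_superset_of_null hN
  refine measure_mono_null (t := ⋃ i, {x : Fin d → ℝ | x i - c i ∈ N'}) (fun x hx => ?_) ?_
  · obtain ⟨i, _, hi⟩ := Finset.exists_mem_eq_sup' (Finset.univ_nonempty (α := Fin d))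
      (fun i => x i - c i)
    exact mem_iUnion.2 ⟨i, by rw [mem_setOf_eq, ← hi]; exact hNN' hx⟩
  · refine measure_iUnion_null fun i => ?_
    refine cylinder_null i (N := (fun t => t - c i) ⁻¹' N') ?_
    have heq : (fun t : ℝ => t - c i) = (fun t : ℝ => t + (-(c i))) := by
      funext t; ring
    rw [heq, measure_preimage_add_right volume (-(c i)) N']
    exact hN'0

lemma map_fmax_ac (c : Fin d → ℝ) {ν : Measure (Fin d → ℝ)} (hreg : regular ν) :
    ν.map (fmax c) ≪ volume := by
  refine Measure.AbsolutelyContinuous.mk fun N hN h0 => ?_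
  rw [Measure.map_apply (fmax_meas c) hN]
  exact hreg.1 (fmax_preimage_null c h0)

lemma ac_map_fmax (c : Fin d → ℝ) {ν : Measure (Fin d → ℝ)} (hreg : regular ν) :
    volume ≪ ν.map (fmax c) := by
  refine Measure.AbsolutelyContinuous.mk fun N hN h0 => ?_
  rw [Measure.map_apply (fmax_meas c) hN] at h0
  have hvol0 : volume (fmax c ⁻¹' N) = 0 := hreg.2 h0
  by_contra hN0
  have hcover : N ⊆ ⋃ n : ℕ, N ∩ Ioo (-(n:ℝ)) n := by
    intro t ht
    obtain ⟨n, hn⟩ := exists_nat_gt |t|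
    exact mem_iUnion.2 ⟨n, ht, by rw [mem_Ioo]; constructor <;> [linarith [neg_abs_le t]; linarith [le_abs_self t]]⟩
  have : ∃ n : ℕ, volume (N ∩ Ioo (-(n:ℝ)) n) ≠ 0 := by
    by_contra hall
    push_neg at hall
    exact hN0 (measure_mono_null hcover (measure_iUnion_null hall))
  obtain ⟨n, hn⟩ := this
  set i₀ : Fin d := Classical.arbitrary (Fin d)
  set T : Set (Fin d → ℝ) :=
    univ.pi (Function.update (fun j => Iic (c j - n)) i₀ ((fun t => t - c i₀) ⁻¹' (N ∩ Ioo (-(n:ℝ)) n))) with hT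
  have hTsub : T ⊆ fmax c ⁻¹' N := by
    intro x hx
    have hx0 : x i₀ - c i₀ ∈ N ∩ Ioo (-(n:ℝ)) n := by
      have h := hx i₀ (mem_univ i₀)
      rwa [Function.update_self] at h
    have hxj : ∀ j, j ≠ i₀ → x j ≤ c j - n := by
      intro j hj
      have := hx j (mem_univ j)
      rw [Function.update_of_ne hj] at this
      simpa using this
    obtain ⟨hxN, hxIoo⟩ := hx0
    rw [mem_Ioo] at hxIoo
    have hfx : fmax c x = x i₀ - c i₀ := by
      refine le_antisymm ?_ (Finset.le_sup' (fun i => x i - c i) (Finset.mem_univ i₀))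
      refine Finset.sup'_le _ _ fun j _ => ?_
      rcases eq_or_ne j i₀ with rfl | hj
      · exact le_rfl
      · have h1 := hxj j hj
        linarith [hxIoo.1]
    rw [mem_preimage, hfx]
    exact hxN
  have hTpos : volume T ≠ 0 := by
    rw [hT, volume_pi, Measure.pi_pi]
    rw [Finset.prod_ne_zero_iff]
    intro j _
    rcases eq_or_ne j i₀ with rfl | hj
    · rw [Function.update_self]
      have heq : (fun t : ℝ => t - c i₀) = (fun t : ℝ => t + (-(c i₀))) := by funext t; ring
      rw [heq, measure_preimage_add_right volume (-(c i₀)) _]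
      exact hn
    · rw [Function.update_of_ne hj]
      simp [Real.volume_Iic]
  exact hTpos (measure_mono_null hTsub hvol0)

lemma map_fmax_regular (c : Fin d → ℝ) (ν : Measure (Fin d → ℝ))
    (hp : IsProbabilityMeasure ν) (hreg : regular ν) :
    regularOn (ν.map (fmax c)) ⊥ ⊤ := by
  rw [regularOn, erealIoo_bot_top, Measure.restrict_univ]
  exact ⟨by simp, map_fmax_ac c hreg, ac_map_fmax c hreg⟩

lemma testFun_fmax (c : Fin d → ℝ) : testFun (fmax c) :=
  ⟨fmax_meas c, ⊥, ⊤, bot_lt_top,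
    fun x => ⟨EReal.bot_lt_coe _, EReal.coe_lt_top _⟩,
    fun ν hp hreg => map_fmax_regular c ν hp hreg⟩


lemma testFun_phi_fmax {d : ℕ} [Nonempty (Fin d)] (c : Fin d → ℝ) : testFun (phi ∘ fmax c) := by
  refine ⟨phi_meas.comp (fmax_meas c), ((0:ℝ) : EReal), ((2:ℝ) : EReal), ?_, ?_, ?_⟩
  · exact EReal.coe_lt_coe_iff.2 (by norm_num)
  · intro x
    have h := phi_range (fmax c x)
    exact ⟨EReal.coe_lt_coe_iff.2 h.1, EReal.coe_lt_coe_iff.2 h.2⟩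
  · intro ν hp hreg
    have hmap : ν.map (phi ∘ fmax c) = (ν.map (fmax c)).map phi :=
      (Measure.map_map phi_meas (fmax_meas c)).symm
    rw [hmap]
    have : IsProbabilityMeasure (ν.map (fmax c)) :=
      Measure.isProbabilityMeasure_map (fmax_meas c).aemeasurable
    exact regularOn_map_phi _ (map_fmax_ac c hreg) (ac_map_fmax c hreg)


lemma integral_unif01 : ∫ x, x ∂unif01 = 1/2 := by
  have h1 : ∫ x, x ∂unif01 = ∫ x in Ioo (0:ℝ) 1, x ∂volume := rfl
  rw [h1, ← integral_Ioc_eq_integral_Ioo,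
    ← intervalIntegral.integral_of_le (by norm_num : (0:ℝ) ≤ 1)]
  rw [integral_id]
  norm_num

/-- Strongly calibrated implies weakly calibrated.  Let μ0 be a regular probability measure
on ℝ^d (initial belief), P a Markov kernel from ℝ^d to Y (data-generating model), and
μ a Markov kernel from Y to ℝ^d (learning procedure) with regular output.  If, for every
test function f ∈ F_d, the pushforward of the joint law ρ = μ0 ⊗ₘ P under
(θ, y) ↦ F_{f_#μ(y)}(f(θ)) = μ(y)({x : f(x) ≤ f(θ)}) is uniform on (0,1), then the
data-averaged output ∫∫ μ(y) dP_θ(y) dμ0(θ) equals μ0. -/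
theorem stmt_7 {d : ℕ} {Y : Type*} [MeasurableSpace Y]
    (μ0 : Measure (Fin d → ℝ)) [IsProbabilityMeasure μ0] (hμ0 : regular μ0)
    (P : Kernel (Fin d → ℝ) Y) [IsMarkovKernel P]
    (μ : Kernel Y (Fin d → ℝ)) [IsMarkovKernel μ]
    (hμreg : ∀ y : Y, regular (μ y))
    (hstrong : ∀ f : (Fin d → ℝ) → ℝ, testFun f →
      (μ0.compProd P).map
        (fun p : (Fin d → ℝ) × Y => ((μ p.2) {x | f x ≤ f p.1}).toReal) = unif01) :
    μ0.bind (fun θ => (P θ).bind (fun y => μ y)) = μ0 := by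
  classical
  -- the averaged data posterior, as a measure
  have hmP : Measurable fun θ => (P θ).bind (fun y => μ y) := by
    have h : (fun θ => (P θ).bind (fun y => μ y)) = fun θ => (μ ∘ₖ P) θ := by
      funext θ; exact (Kernel.comp_apply μ P θ).symm
    rw [h]; exact (μ ∘ₖ P).measurable
  set m := μ0.bind (fun θ => (P θ).bind (fun y => μ y)) with hm
  set ρ := μ0.compProd P with hρ
  have hmApply : ∀ {A : Set (Fin d → ℝ)}, MeasurableSet A →
      m A = ∫⁻ p, μ p.2 A ∂ρ := by
    intro A hA
    rw [hm, Measure.bind_apply hA hmP.aemeasurable, hρ,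
      Measure.lintegral_compProd (show Measurable fun p : (Fin d → ℝ) × Y => (μ p.2) A from
        (Kernel.measurable_coe μ hA).comp measurable_snd)]
    exact lintegral_congr fun θ => Measure.bind_apply hA μ.measurable.aemeasurable
  have hmuniv : m univ = 1 := by
    rw [hmApply MeasurableSet.univ]
    simp
  have hmprob : IsProbabilityMeasure m := ⟨hmuniv⟩
  have hρfst : ∀ {s : Set (Fin d → ℝ)}, MeasurableSet s → ρ (Prod.fst ⁻¹' s) = μ0 s := by
    intro s hs
    rw [← Measure.fst_apply hs, hρ, Measure.fst_compProd]
  -- main claim: equality on rectangles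
  have hrect : ∀ c : Fin d → ℝ,
      m (univ.pi fun i => Iic (c i)) = μ0 (univ.pi fun i => Iic (c i)) := by
    intro c
    rcases Nat.eq_zero_or_pos d with hd | hd
    · have hu : (univ.pi fun i => Iic (c i)) = (univ : Set (Fin d → ℝ)) := by
        ext x
        simp only [mem_pi, mem_univ, forall_true_left, iff_true]
        intro i
        exact absurd i.isLt (by omega)
      rw [hu, hmuniv, measure_univ]
    · have hne : Nonempty (Fin d) := Fin.pos_iff_nonempty.1 hd
      set f := fmax c with hf
      set A : Set (Fin d → ℝ) := univ.pi fun i => Iic (c i) with hAdef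
      have hA : MeasurableSet A := MeasurableSet.univ_pi fun i => measurableSet_Iic
      have hAset : A = {x | f x ≤ 0} := by
        rw [hAdef, fmax_le_set c 0]
        simp
      -- the two statistics
      set stat : (Fin d → ℝ) × Y → ℝ :=
        fun p => ((μ p.2) {x | f x ≤ f p.1}).toReal with hstat
      set stat' : (Fin d → ℝ) × Y → ℝ :=
        fun p => ((μ p.2) {x | (phi ∘ f) x ≤ (phi ∘ f) p.1}).toReal with hstat'
      set Vf : (Fin d → ℝ) × Y → ℝ := fun p => ((μ p.2) {x | f x ≤ 0}).toReal with hVf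
      set ind : (Fin d → ℝ) × Y → ℝ := fun p => if f p.1 < 0 then (1:ℝ) else 0 with hind
      -- measurability
      have hkm : ∀ g : (Fin d → ℝ) → ℝ, Measurable g →
          Measurable fun p : (Fin d → ℝ) × Y => ((μ p.2) {x | g x ≤ g p.1}).toReal := by
        intro g hg
        have ht : MeasurableSet {q : ((Fin d → ℝ) × Y) × (Fin d → ℝ) | g q.2 ≤ g q.1.1} :=
          measurableSet_le (hg.comp measurable_snd)
            (hg.comp (measurable_fst.comp measurable_fst))
        have := Kernel.measurable_kernel_prodMk_left
          (κ := μ.comap Prod.snd measurable_snd) ht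
        simp only [Kernel.comap_apply] at this
        exact this.ennreal_toReal
      have hstatm : Measurable stat := hkm f (fmax_meas c)
      have hstat'm : Measurable stat' := by
        have := hkm (phi ∘ f) (phi_meas.comp (fmax_meas c))
        exact this
      have hVm : Measurable Vf := by
        rw [hAset] at hA
        exact ((Kernel.measurable_coe μ hA).comp measurable_snd).ennreal_toReal
      have hindm : Measurable ind :=
        Measurable.ite (measurableSet_lt ((fmax_meas c).comp measurable_fst)
          measurable_const) measurable_const measurable_const
      -- boundedness / integrability
      have hbd : ∀ (y : Y) (s : Set (Fin d → ℝ)), ((μ y) s).toReal ≤ 1 := by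
        intro y s
        have h1 : ((μ y) s) ≤ 1 := prob_le_one
        calc ((μ y) s).toReal ≤ (1 : ℝ≥0∞).toReal := ENNReal.toReal_mono ENNReal.one_ne_top h1
        _ = 1 := ENNReal.toReal_one
      have hintegrable : ∀ g : (Fin d → ℝ) × Y → ℝ, Measurable g → (∀ p, |g p| ≤ 1) →
          Integrable g ρ := by
        intro g hg hb
        exact Integrable.mono' (integrable_const 1) hg.aestronglyMeasurable
          (Filter.Eventually.of_forall hb)
      have habs : ∀ (y : Y) (s : Set (Fin d → ℝ)), |((μ y) s).toReal| ≤ 1 := by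
        intro y s
        rw [abs_of_nonneg ENNReal.toReal_nonneg]
        exact hbd y s
      have hint_stat : Integrable stat ρ := hintegrable _ hstatm fun p => habs _ _
      have hint_V : Integrable Vf ρ := hintegrable _ hVm fun p => habs _ _
      have hint_ind : Integrable ind ρ := hintegrable _ hindm fun p => by
        rw [hind]; dsimp only; split <;> simp
      -- integral of the statistics is 1/2
      have hhalf : ∀ g : (Fin d → ℝ) → ℝ, testFun g →
          ∫ p, ((μ p.2) {x | g x ≤ g p.1}).toReal ∂ρ = 1/2 := by
        intro g hg
        have hmap := hstrong g hg
        have hgm : Measurable fun p : (Fin d → ℝ) × Y =>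
            ((μ p.2) {x | g x ≤ g p.1}).toReal := hkm g hg.1
        calc ∫ p, ((μ p.2) {x | g x ≤ g p.1}).toReal ∂ρ
            = ∫ x, x ∂(ρ.map fun p : (Fin d → ℝ) × Y =>
              ((μ p.2) {x | g x ≤ g p.1}).toReal) :=
              (integral_map hgm.aemeasurable aestronglyMeasurable_id).symm
          _ = ∫ x, x ∂unif01 := by rw [hρ] at *; rw [hmap]
          _ = 1/2 := integral_unif01
      have h1 : ∫ p, stat p ∂ρ = 1/2 := hhalf f (testFun_fmax c)
      have h2 : ∫ p, stat' p ∂ρ = 1/2 := hhalf (phi ∘ f) (testFun_phi_fmax c)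
      -- the pointwise (a.e.) identity
      have hzero_null : ∀ {ν : Measure (Fin d → ℝ)}, ν ≪ volume → ν {x | f x = 0} = 0 := by
        intro ν hac
        have : {x | f x = 0} = f ⁻¹' {0} := rfl
        rw [this]
        exact hac (fmax_preimage_null c Real.volume_singleton)
      have hae : ∀ᵐ p ∂ρ, stat' p = stat p - Vf p + ind p := by
        have hnull : ρ {p : (Fin d → ℝ) × Y | f p.1 = 0} = 0 := by
          have hs : MeasurableSet {x : Fin d → ℝ | f x = 0} :=
            (fmax_meas c) (measurableSet_singleton 0)
          have : ({p : (Fin d → ℝ) × Y | f p.1 = 0}) = Prod.fst ⁻¹' {x | f x = 0} := rfl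
          rw [this, hρfst hs]
          exact hzero_null hμ0.1
        have hne' : ∀ᵐ p ∂ρ, f p.1 ≠ 0 := by
          rw [ae_iff]
          convert hnull using 2
          ext p
          simp
        filter_upwards [hne'] with p hp
        set ν : Measure (Fin d → ℝ) := μ p.2 with hν
        have hνreg := hμreg p.2
        have hν0 : ν {x | f x = 0} = 0 := hzero_null hνreg.1
        have hmeasle : ∀ t : ℝ, MeasurableSet {x | f x ≤ t} :=
          fun t => measurableSet_le (fmax_meas c) measurable_const
        rcases lt_or_gt_of_ne hp with hneg | hpos
        · -- f p.1 < 0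
          have hindval : ind p = 1 := if_pos hneg
          set Sphi : Set (Fin d → ℝ) := {x | (phi ∘ f) x ≤ (phi ∘ f) p.1} with hSphi
          set SI : Set (Fin d → ℝ) := {x | f x ≤ f p.1} ∪ {x | 0 < f x} with hSI
          have hSae : Sphi =ᵐ[ν] SI := by
            have hsub : (Sphi \ SI) ∪ (SI \ Sphi) ⊆ {x | f x = 0} := by
              intro x hx
              by_contra hfx0
              have hfx0' : f x ≠ 0 := hfx0
              have hiff : x ∈ Sphi ↔ x ∈ SI := by
                rw [hSphi, hSI]
                simp only [Function.comp_apply, mem_setOf_eq, mem_union]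
                rcases lt_or_gt_of_ne hfx0' with hxneg | hxpos
                · rw [phi_le_phi_neg hxneg hneg]
                  constructor
                  · exact Or.inl
                  · rintro (h | h)
                    · exact h
                    · linarith
                · constructor
                  · intro _; exact Or.inr hxpos
                  · intro _
                    exact le_of_lt (lt_trans (phi_mem_pos hxpos).2 (phi_mem_neg hneg).1)
              rcases hx with ⟨hx1, hx2⟩ | ⟨hx1, hx2⟩
              · exact hx2 (hiff.1 hx1)
              · exact hx2 (hiff.2 hx1)
            have hzero : ν ((Sphi \ SI) ∪ (SI \ Sphi)) = 0 :=
              measure_mono_null hsub hν0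
            rw [Filter.eventuallyEq_set, ae_iff]
            refine measure_mono_null ?_ hzero
            intro x hx
            simp only [mem_setOf_eq] at hx
            by_cases hmem : x ∈ Sphi
            · exact Or.inl ⟨hmem, fun hc => hx (iff_of_true hmem hc)⟩
            · refine Or.inr ⟨?_, hmem⟩
              by_contra hc
              exact hx (iff_of_false hmem hc)
          have hdisj : Disjoint {x : Fin d → ℝ | f x ≤ f p.1} {x | 0 < f x} := by
            rw [disjoint_left]
            intro x hx1 hx2
            simp only [mem_setOf_eq] at hx1 hx2
            linarith
          have hcompl : {x : Fin d → ℝ | 0 < f x} = {x | f x ≤ 0}ᶜ := by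
            ext x; simp [not_le]
          have hν_union : ν Sphi =
              ν {x | f x ≤ f p.1} + (1 - ν {x | f x ≤ 0}) := by
            rw [measure_congr hSae, hSI, measure_union hdisj (by rw [hcompl]; exact (hmeasle 0).compl),
              hcompl, measure_compl (hmeasle 0) (measure_ne_top ν _), measure_univ]
          rw [hstat', hstat, hVf, hindval]
          dsimp only
          rw [hν_union]
          rw [ENNReal.toReal_add (measure_ne_top ν _)
            (by
              refine ne_top_of_le_ne_top ENNReal.one_ne_top ?_
              exact tsub_le_self.trans le_rfl),
            ENNReal.toReal_sub_of_le prob_le_one ENNReal.one_ne_top, ENNReal.toReal_one]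
          ring
        · -- 0 < f p.1
          have hindval : ind p = 0 := if_neg (by linarith)
          have hSeq : {x | (phi ∘ f) x ≤ (phi ∘ f) p.1} =
              {x | f x ≤ f p.1} \ {x | f x ≤ 0} := by
            ext x
            simp only [Function.comp_apply, mem_setOf_eq, mem_diff, not_le]
            rcases lt_trichotomy (f x) 0 with hxneg | hxzero | hxpos
            · constructor
              · intro h
                exfalso
                have := lt_trans (phi_mem_pos hpos).2 (phi_mem_neg hxneg).1
                linarith
              · rintro ⟨_, h2⟩; linarith
            · rw [hxzero, phi_zero]
              constructor
              · intro h
                have := (phi_mem_pos hpos).2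
                norm_num at h ⊢
                linarith
              · rintro ⟨_, h2⟩; linarith
            · rw [phi_le_phi_pos hxpos hpos]
              exact ⟨fun h => ⟨h, hxpos⟩, fun h => h.1⟩
          have hsub : {x : Fin d → ℝ | f x ≤ 0} ⊆ {x | f x ≤ f p.1} := by
            intro x hx
            simp only [mem_setOf_eq] at hx ⊢
            linarith
          have hν_diff : ν {x | (phi ∘ f) x ≤ (phi ∘ f) p.1} =
              ν {x | f x ≤ f p.1} - ν {x | f x ≤ 0} := by
            rw [hSeq, measure_diff hsub (hmeasle 0).nullMeasurableSet (measure_ne_top ν _)]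
          rw [hstat', hstat, hVf, hindval]
          dsimp only
          rw [hν_diff, ENNReal.toReal_sub_of_le (measure_mono hsub) (measure_ne_top ν _)]
          ring
      -- integrate the identity
      have h2' : ∫ p, (stat p - Vf p + ind p) ∂ρ = 1/2 := by
        rw [← integral_congr_ae hae]
        exact h2
      have hsv : Integrable (fun p => stat p - Vf p) ρ := hint_stat.sub hint_V
      rw [integral_add hsv hint_ind, integral_sub hint_stat hint_V, h1] at h2'
      -- identify the integrals
      have hVint : ∫ p, Vf p ∂ρ = (m A).toReal := by
        rw [hAset] at hA
        have : ∫ p, Vf p ∂ρ = (∫⁻ p, (μ p.2) {x | f x ≤ 0} ∂ρ).toReal := by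
          refine integral_toReal ?_ ?_
          · exact ((Kernel.measurable_coe μ hA).comp measurable_snd).aemeasurable
          · exact Filter.Eventually.of_forall fun p => measure_lt_top _ _
        rw [this, ← hmApply hA, hAset]
      have hindint : ∫ p, ind p ∂ρ = (μ0 A).toReal := by
        have hsm : MeasurableSet {p : (Fin d → ℝ) × Y | f p.1 < 0} :=
          measurableSet_lt ((fmax_meas c).comp measurable_fst) measurable_const
        have heqind : ind = Set.indicator {p : (Fin d → ℝ) × Y | f p.1 < 0} (fun _ => (1:ℝ)) := by
          funext p
          rw [hind, Set.indicator_apply]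
          rfl
        rw [heqind, integral_indicator_const (1:ℝ) hsm, smul_eq_mul, mul_one]
        have hlt : MeasurableSet {x : Fin d → ℝ | f x < 0} :=
          measurableSet_lt (fmax_meas c) measurable_const
        have : ({p : (Fin d → ℝ) × Y | f p.1 < 0}) = Prod.fst ⁻¹' {x | f x < 0} := rfl
        rw [this, measureReal_def, hρfst hlt]
        congr 1
        -- μ0 {f < 0} = μ0 {f ≤ 0} = μ0 A
        have hae0 : ({x | f x ≤ 0} : Set (Fin d → ℝ)) =ᵐ[μ0] ({x | f x < 0} : Set (Fin d → ℝ)) := by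
          rw [Filter.eventuallyEq_set, ae_iff]
          refine measure_mono_null ?_ (hzero_null hμ0.1)
          intro x hx
          simp only [mem_setOf_eq] at hx ⊢
          by_contra h
          rcases lt_trichotomy (f x) 0 with h1 | h1 | h1
          · exact hx (iff_of_true (le_of_lt h1) h1)
          · exact h h1
          · exact hx (iff_of_false (not_le.2 h1) (not_lt.2 (le_of_lt h1)))
        rw [hAset, measure_congr hae0]
      rw [hVint, hindint] at h2'
      have htoReal : (m A).toReal = (μ0 A).toReal := by linarith
      exact (ENNReal.toReal_eq_toReal_iff' (measure_ne_top m A) (measure_ne_top μ0 A)).1 htoReal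
  -- conclude by the π-system argument
  have hCgen : (inferInstance : MeasurableSpace (Fin d → ℝ)) =
      MeasurableSpace.generateFrom (univ.pi '' univ.pi fun _ : Fin d => range Iic) := by
    refine (generateFrom_eq_pi (fun i => ?_) fun i => ?_).symm
    · exact ((borel_eq_generateFrom_Iic ℝ).symm.trans (BorelSpace.measurable_eq (α := ℝ)).symm)
    · exact ⟨fun n => Iic (n : ℝ), fun n => mem_range_self _, by
        ext x
        simp only [mem_iUnion, mem_Iic, mem_univ, iff_true]
        obtain ⟨n, hn⟩ := exists_nat_ge x
        exact ⟨n, hn⟩⟩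
  refine ext_of_generate_finite _ hCgen (IsPiSystem.pi fun i => isPiSystem_Iic) ?_ ?_
  · rintro s ⟨S, hS, rfl⟩
    have hc : ∀ i, ∃ ci : ℝ, Iic ci = S i := fun i => hS i (mem_univ i)
    choose cc hcc using hc
    have : S = fun i => Iic (cc i) := funext fun i => (hcc i).symm
    rw [this]
    exact hrect cc
  · rw [hmuniv, measure_univ]
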